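/- Let A be a dense subring of B, where B is a pm-ring (every prime ideal of B is contained in a unique maximal ideal). Then for any two distinct maximal ideals M and M' of B, the intersection (M ∩ A) ∩ (M' ∩ A) contains no prime ideal of A. -/
import Mathlib


def IsDenseSubring {B : Type*} [CommRing B] (A : Subring B) : Prop :=
  ∀ I : Ideal B, ∀ b ∉ I.radical, ∃ a ∉ I.radical, a * b ∈ A

theorem stmt_10 {B : Type*} [CommRing B] (A : Subring B) (hA : IsDenseSubring A)
    (hpm : ∀ P : Ideal B, P.IsPrime → ∃! M : Ideal B, M.IsMaximal ∧ P ≤ M)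
    (M M' : Ideal B) (hM : M.IsMaximal) (hM' : M'.IsMaximal) (hne : M ≠ M') :
    ¬ ∃ P : Ideal A, P.IsPrime ∧ P ≤ M.comap A.subtype ⊓ M'.comap A.subtype := by
  rintro ⟨P, hP, hPle⟩
  have hMp : M.IsPrime := hM.isPrime
  have hM'p : M'.IsPrime := hM'.isPrime
  -- the multiplicative set of products b*b', b ∉ M, b' ∉ M'
  let S : Submonoid B :=
    { carrier := {x | ∃ b ∉ M, ∃ b' ∉ M', x = b * b'}
      mul_mem' := by
        rintro x y ⟨b, hb, b', hb', rfl⟩ ⟨c, hc, c', hc', rfl⟩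
        exact ⟨b * c, fun h => (hMp.mem_or_mem h).elim hb hc,
          b' * c', fun h => (hM'p.mem_or_mem h).elim hb' hc', by ring⟩
      one_mem' := ⟨1, hMp.1 ∘ (Ideal.eq_top_iff_one M).mpr,
        1, hM'p.1 ∘ (Ideal.eq_top_iff_one M').mpr, (one_mul 1).symm⟩ }
  -- 0 ∈ S : otherwise a prime below both M and M' exists, contradicting pm
  have h0 : (0 : B) ∈ S := by
    by_contra h0
    have hdisj : Disjoint ((⊥ : Ideal B) : Set B) (S : Set B) := by
      rw [Set.disjoint_left]
      rintro x hx hxS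
      simp only [SetLike.mem_coe, Ideal.mem_bot] at hx
      exact h0 (hx ▸ hxS)
    obtain ⟨Q, hQ, -, hQS⟩ := Ideal.exists_le_prime_disjoint ⊥ S hdisj
    have hQM : Q ≤ M := fun q hq => by
      by_contra hqM
      exact Set.disjoint_left.mp hQS hq ⟨q, hqM, 1,
        hM'p.1 ∘ (Ideal.eq_top_iff_one M').mpr, (mul_one q).symm⟩
    have hQM' : Q ≤ M' := fun q hq => by
      by_contra hqM'
      exact Set.disjoint_left.mp hQS hq ⟨1,
        hMp.1 ∘ (Ideal.eq_top_iff_one M).mpr, q, hqM', (one_mul q).symm⟩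
    obtain ⟨N, -, hNu⟩ := hpm Q hQ
    exact hne ((hNu M ⟨hM, hQM⟩).trans (hNu M' ⟨hM', hQM'⟩).symm)
  obtain ⟨b, hb, b', hb', hbb'⟩ := h0
  have hbr : b ∉ M.radical := by rwa [hMp.radical]
  have hb'r : b' ∉ M'.radical := by rwa [hM'p.radical]
  obtain ⟨a, ha, hab⟩ := hA M b hbr
  obtain ⟨a', ha', ha'b'⟩ := hA M' b' hb'r
  rw [hMp.radical] at ha
  rw [hM'p.radical] at ha'
  have habM : a * b ∉ M := fun h => (hMp.mem_or_mem h).elim ha hb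
  have ha'b'M' : a' * b' ∉ M' := fun h => (hM'p.mem_or_mem h).elim ha' hb'
  -- the product of the two elements of A is zero, hence in P
  have hprod : (⟨a * b, hab⟩ : A) * ⟨a' * b', ha'b'⟩ ∈ P := by
    have : (⟨a * b, hab⟩ : A) * ⟨a' * b', ha'b'⟩ = 0 := by
      ext
      show (a * b) * (a' * b') = 0
      calc (a * b) * (a' * b') = (a * a') * (b * b') := by ring
        _ = 0 := by rw [← hbb']; ring
    rw [this]; exact P.zero_mem
  rcases hP.mem_or_mem hprod with h | h
  · exact habM ((hPle h).1)
  · exact ha'b'M' ((hPle h).2)
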